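/- arXiv:1411.7256 — 4 statements merged into one kernel-verified Lean document; each statement's English description precedes it below -/
import Mathlib

section
/- Fix x > 0 and let u*(x,t) := (2t/ξ²)·(b/(e^{bt} − 1) − a/x). Then there exists a constant C > 0 such that, as t → 0⁺, exp(−x·u*(x,t)/t + Λ_V(u*(x,t), t)/t) = C · t^{−μ} · exp(−2x/(ξ² t)) · (1 + O(t)), where Λ_V(u,t) := −μ t · log(1 − u/(t λ_t)). -/
open Real Filter Topology


lemma aux_exp_cubic (s : ℝ) (hs : |s| ≤ 1) :
    |Real.exp s - (1 + s + s ^ 2 / 2)| ≤ |s| ^ 3 := by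
  have h := Real.exp_bound hs (n := 3) (by norm_num)
  have hsum : ∑ m ∈ Finset.range 3, s ^ m / (m.factorial : ℝ) = 1 + s + s ^ 2 / 2 := by
    rw [Finset.sum_range_succ, Finset.sum_range_succ, Finset.sum_range_succ,
      Finset.sum_range_zero]
    norm_num
  rw [hsum] at h
  calc |Real.exp s - (1 + s + s ^ 2 / 2)| ≤ |s| ^ 3 * (4 / (6 * 3)) := by
        convert h using 2 <;> norm_num
    _ ≤ |s| ^ 3 := by nlinarith [abs_nonneg s, pow_nonneg (abs_nonneg s) 3]

lemma aux_E1_lower (s : ℝ) (h1 : -1 ≤ s) (h2 : s < 0) : -s / 2 ≤ 1 - Real.exp s := by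
  have h3 : 1 - s ≤ Real.exp (-s) := by
    have := Real.add_one_le_exp (-s); linarith
  have h5 : Real.exp s * (1 - s) ≤ 1 := by
    calc Real.exp s * (1 - s) ≤ Real.exp s * Real.exp (-s) :=
          mul_le_mul_of_nonneg_left h3 (le_of_lt (Real.exp_pos s))
      _ = 1 := by rw [← Real.exp_add]; simp
  nlinarith [Real.exp_pos s]

lemma aux_log_bound (y : ℝ) (hy : 1/2 ≤ y) : |Real.log y| ≤ 2 * |y - 1| := by
  have hy0 : 0 < y := by linarith
  have h1 : Real.log y ≤ y - 1 := Real.log_le_sub_one_of_pos hy0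
  have h2 : Real.log (1 / y) ≤ 1 / y - 1 := Real.log_le_sub_one_of_pos (by positivity)
  rw [Real.log_div one_ne_zero (ne_of_gt hy0), Real.log_one] at h2
  have h3 : y - 1 ≤ y * Real.log y := by
    have := mul_le_mul_of_nonneg_left h2 (le_of_lt hy0)
    have hyy : y * (1 / y - 1) = 1 - y := by field_simp
    rw [hyy] at this
    nlinarith
  rcases abs_cases (Real.log y) with ⟨he, _⟩ | ⟨he, hneg⟩
  · rw [he]
    calc Real.log y ≤ y - 1 := h1
      _ ≤ |y - 1| := le_abs_self _
      _ ≤ 2 * |y - 1| := by nlinarith [abs_nonneg (y-1)]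
  · rw [he]
    have hy1 : y < 1 := by
      by_contra hc
      exact absurd (Real.log_nonneg (by linarith)) (not_le.mpr hneg)
    have habs : |y - 1| = 1 - y := by rw [abs_of_nonpos (by linarith)]; ring
    rw [habs]
    nlinarith

set_option maxHeartbeats 1000000 in
/-- Sharp asymptotics of the saddlepoint prefactor: for fixed `x > 0` there is a constant
`C > 0` such that `exp(−x u*(x,t)/t + Λ_V(u*(x,t),t)/t) = C t^{−μ} e^{−2x/(ξ²t)} (1 + O(t))`
as `t → 0⁺`. -/
theorem gamma_saddlepoint_prefactor_asymptotics
    (a ξ b : ℝ) (ha : 0 < a) (hξ : 0 < ξ) (hb : b < 0)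
    (μ : ℝ) (hμ_def : μ = 2 * a / ξ ^ 2) (hμ : 1 < μ)
    (lam : ℝ → ℝ) (hlam : ∀ t, lam t = -2 * b / (ξ ^ 2 * (1 - Real.exp (b * t))))
    (Λ : ℝ → ℝ → ℝ)
    (hΛ : ∀ t, 0 < t → ∀ u, Λ u t = -μ * t * Real.log (1 - u / (t * lam t)))
    (ustar : ℝ → ℝ → ℝ)
    (hustar : ∀ x t, ustar x t = 2 * t / ξ ^ 2 * (b / (Real.exp (b * t) - 1) - a / x))
    (x : ℝ) (hx : 0 < x) :
    ∃ C > (0 : ℝ), ∃ C' > (0 : ℝ), ∃ t₀ > (0 : ℝ), ∀ t, 0 < t → t < t₀ →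
      |Real.exp (-(x * ustar x t) / t + Λ (ustar x t) t / t)
          - C * t ^ (-μ) * Real.exp (-(2 * x) / (ξ ^ 2 * t))|
        ≤ C' * t * (C * t ^ (-μ) * Real.exp (-(2 * x) / (ξ ^ 2 * t))) := by
  have hξ2 : (0:ℝ) < ξ ^ 2 := by positivity
  have hξ0 : ξ ≠ 0 := ne_of_gt hξ
  have hb0 : b ≠ 0 := ne_of_lt hb
  have hbabs : 0 < |b| := abs_pos.mpr hb0
  have hμ0 : 0 < μ := by linarith
  have hx0 : x ≠ 0 := ne_of_gt hx
  set M : ℝ := 8 * x * b ^ 2 / ξ ^ 2 + 2 * μ * |b| with hMdef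
  have hMpos : 0 < M := by positivity
  refine ⟨Real.exp (μ - μ * Real.log (a / x) + x * b / ξ ^ 2), Real.exp_pos _,
    2 * M, by positivity, min (1 / (2 * |b|)) (1 / M), by positivity, ?_⟩
  intro t ht ht0
  have ht0' : t ≠ 0 := ne_of_gt ht
  -- basic quantities
  set s : ℝ := b * t with hsdef
  have hs_neg : s < 0 := mul_neg_of_neg_of_pos hb ht
  have hs_abs : |s| ≤ 1/2 := by
    have h1 : t < 1 / (2 * |b|) := lt_of_lt_of_le ht0 (min_le_left _ _)
    have : |s| = |b| * t := by
      rw [hsdef, abs_mul, abs_of_pos ht]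
    rw [this]
    rw [lt_div_iff₀ (by positivity)] at h1
    nlinarith
  have hs_abs1 : |s| ≤ 1 := le_trans hs_abs (by norm_num)
  have hMt : M * t < 1 := by
    have h1 : t < 1 / M := lt_of_lt_of_le ht0 (min_le_right _ _)
    rw [lt_div_iff₀ hMpos] at h1; linarith
  set E1 : ℝ := Real.exp s - 1 with hE1def
  have hE1_neg : E1 < 0 := by
    have : Real.exp s < 1 := Real.exp_lt_one_iff.mpr hs_neg
    simp [hE1def]; linarith
  have hE10 : E1 ≠ 0 := ne_of_lt hE1_neg
  have hE1_lb : -s / 2 ≤ -E1 := by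
    have := aux_E1_lower s (by cases abs_le.mp hs_abs1; linarith) hs_neg
    simp [hE1def]; linarith
  set f : ℝ := E1 / s with hfdef
  have hf_pos : 0 < f := div_pos_of_neg_of_neg hE1_neg hs_neg
  have hf0 : f ≠ 0 := ne_of_gt hf_pos
  set R : ℝ := Real.exp s - (1 + s + s ^ 2 / 2) with hRdef
  have hR : |R| ≤ |s| ^ 3 := aux_exp_cubic s hs_abs1
  -- identity: 1 - u*/(t lam t)
  have hlam_ne : ξ ^ 2 * (1 - Real.exp (b * t)) ≠ 0 := by
    have : Real.exp (b * t) < 1 := Real.exp_lt_one_iff.mpr hs_neg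
    have h2 : 1 - Real.exp (b * t) ≠ 0 := by linarith
    exact mul_ne_zero (ne_of_gt hξ2) h2
  have hE1' : Real.exp (b * t) - 1 ≠ 0 := by rw [← hsdef]; exact hE10
  have h1 : 1 - ustar x t / (t * lam t) = (a / x) * f * t := by
    rw [hustar, hlam, hfdef, hE1def, hsdef]
    field_simp
    rw [mul_comm t b]
    linear_combination (-(b * x)) * mul_inv_cancel₀ hE1'
  -- Λ/t
  have hlog1 : Real.log ((a / x) * f * t) = Real.log (a / x) + Real.log f + Real.log t := by
    rw [Real.log_mul (by positivity) ht0', Real.log_mul (by positivity) hf0]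
  have hB : Λ (ustar x t) t / t = -μ * (Real.log (a / x) + Real.log f + Real.log t) := by
    rw [hΛ t ht, h1, hlog1]
    field_simp
  -- -(x u*)/t
  have hC : -(x * ustar x t) / t = μ - (2 * x / ξ ^ 2) * (1 / (t * f)) := by
    rw [hustar, hμ_def, hfdef, hE1def, hsdef]
    field_simp
    ring
  -- exponent identity
  set g : ℝ := (2 * x / ξ ^ 2) * (1 / t - 1 / (t * f) - b / 2) - μ * Real.log f with hgdef
  have key : -(x * ustar x t) / t + Λ (ustar x t) t / t
      = (μ - μ * Real.log (a / x) + x * b / ξ ^ 2)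
        + (Real.log t * (-μ) + (-(2 * x) / (ξ ^ 2 * t) + g)) := by
    rw [hB, hC, hgdef]
    field_simp
    ring
  -- bound on g
  have hterm1 : |1 / t - 1 / (t * f) - b / 2| ≤ 4 * b ^ 2 * t := by
    have hid : 1 / t - 1 / (t * f) - b / 2
        = (2 * (E1 - s) - s * E1) / (2 * t * E1) := by
      rw [hfdef, hsdef]
      field_simp
    have hN : 2 * (E1 - s) - s * E1 = 2 * R - s ^ 3 / 2 - s * R := by
      rw [hRdef, hE1def]; ring
    have hNabs : |2 * (E1 - s) - s * E1| ≤ 4 * |s| ^ 3 := by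
      rw [hN]
      have e1 : |s ^ 3| = |s| ^ 3 := abs_pow s 3
      have e2 : |s * R| = |s| * |R| := abs_mul s R
      have e3 : |s| * |R| ≤ |s| ^ 3 := by
        calc |s| * |R| ≤ 1 * |s| ^ 3 :=
              mul_le_mul hs_abs1 hR (abs_nonneg R) zero_le_one
          _ = |s| ^ 3 := one_mul _
      have b1 : -(|s| ^ 3) ≤ R := by linarith [neg_abs_le R]
      have b2 : R ≤ |s| ^ 3 := (le_abs_self R).trans hR
      have b3 : -(|s| ^ 3) ≤ s ^ 3 := by rw [← e1]; exact neg_abs_le _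
      have b4 : s ^ 3 ≤ |s| ^ 3 := by rw [← e1]; exact le_abs_self _
      have b5 : -(|s| ^ 3) ≤ s * R := by
        have := neg_abs_le (s * R); rw [e2] at this; linarith
      have b6 : s * R ≤ |s| ^ 3 := by
        have := le_abs_self (s * R); rw [e2] at this; linarith
      have hnn : 0 ≤ |s| ^ 3 := pow_nonneg (abs_nonneg s) 3
      clear_value s E1 f R
      rw [abs_le]
      constructor <;> linarith
    have hDen : t * |s| ≤ |2 * t * E1| := by
      have h1 : |s| / 2 ≤ |E1| := by
        rw [abs_of_neg hs_neg, abs_of_neg hE1_neg]; linarith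
      have h2 : |2 * t * E1| = 2 * t * |E1| := by
        rw [abs_mul, abs_of_pos (by linarith : (0:ℝ) < 2 * t)]
      rw [h2]
      calc t * |s| = 2 * t * (|s| / 2) := by ring
        _ ≤ 2 * t * |E1| := by
            exact mul_le_mul_of_nonneg_left h1 (by linarith)
    rw [hid, abs_div]
    have hden_pos : 0 < t * |s| := mul_pos ht (abs_pos.mpr (ne_of_lt hs_neg))
    calc |2 * (E1 - s) - s * E1| / |2 * t * E1| ≤ 4 * |s| ^ 3 / (t * |s|) :=
          div_le_div₀ (by positivity) hNabs hden_pos hDen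
      _ = 4 * b ^ 2 * t := by
          have hsabs : |s| = -s := abs_of_neg hs_neg
          rw [hsabs]
          field_simp
          rw [hsdef]; ring
  have hterm2 : |Real.log f| ≤ 2 * |b| * t := by
    have hf1 : |f - 1| ≤ |s| := by
      have hid : f - 1 = (s ^ 2 / 2 + R) / s := by
        rw [hfdef, hRdef, hE1def]; field_simp; linear_combination 2 * mul_inv_cancel₀ (ne_of_lt hs_neg)
      rw [hid, abs_div]
      have : |s ^ 2 / 2 + R| ≤ s ^ 2 := by
        have h1 : |s ^ 2 / 2 + R| ≤ |s ^ 2 / 2| + |R| := abs_add_le _ _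
        have h2 : |s ^ 2 / 2| = s ^ 2 / 2 := abs_of_nonneg (by positivity)
        have h3 : |s| ^ 3 ≤ |s| ^ 2 / 2 := by
          nlinarith [abs_nonneg s, sq_nonneg s]
        have h4 : |s| ^ 2 = s ^ 2 := sq_abs s
        linarith [hR]
      have hsne : |s| ≠ 0 := ne_of_gt (abs_pos.mpr (ne_of_lt hs_neg))
      calc |s ^ 2 / 2 + R| / |s| ≤ s ^ 2 / |s| := by
            gcongr
        _ = |s| := by
            rw [← sq_abs, sq, mul_div_assoc, div_self hsne, mul_one]
    have hf_half : 1/2 ≤ f := by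
      have := abs_le.mp hf1
      have := abs_le.mp hs_abs
      linarith [this.1]
    calc |Real.log f| ≤ 2 * |f - 1| := aux_log_bound f hf_half
      _ ≤ 2 * |s| := by linarith
      _ = 2 * |b| * t := by rw [hsdef, abs_mul, abs_of_pos ht]; ring
  have hg_bound : |g| ≤ M * t := by
    rw [hgdef]
    calc |(2 * x / ξ ^ 2) * (1 / t - 1 / (t * f) - b / 2) - μ * Real.log f|
        ≤ |(2 * x / ξ ^ 2) * (1 / t - 1 / (t * f) - b / 2)| + |μ * Real.log f| :=
          abs_sub _ _
      _ ≤ (2 * x / ξ ^ 2) * (4 * b ^ 2 * t) + μ * (2 * |b| * t) := by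
          rw [abs_mul, abs_mul, abs_of_pos (by positivity : (0:ℝ) < 2 * x / ξ ^ 2),
            abs_of_pos hμ0]
          gcongr
      _ = M * t := by rw [hMdef]; field_simp; ring
  have hg1 : |g| ≤ 1 := le_trans hg_bound (le_of_lt hMt)
  -- conclude
  set K : ℝ := Real.exp (μ - μ * Real.log (a / x) + x * b / ξ ^ 2) * t ^ (-μ)
    * Real.exp (-(2 * x) / (ξ ^ 2 * t)) with hKdef
  have hKpos : 0 < K := by
    rw [hKdef]
    positivity
  have hKrepr : K = Real.exp ((μ - μ * Real.log (a / x) + x * b / ξ ^ 2)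
      + (Real.log t * (-μ) + (-(2 * x) / (ξ ^ 2 * t)))) := by
    rw [hKdef, Real.rpow_def_of_pos ht, ← Real.exp_add, ← Real.exp_add]
    congr 1
    ring
  have hsplit : Real.exp (-(x * ustar x t) / t + Λ (ustar x t) t / t) = K * Real.exp g := by
    rw [key, hKrepr, ← Real.exp_add]
    ring_nf
  rw [hsplit]
  have habsK : |K * Real.exp g - K| = K * |Real.exp g - 1| := by
    have h : K * Real.exp g - K = K * (Real.exp g - 1) := by ring
    rw [h, abs_mul, abs_of_pos hKpos]
  rw [habsK]
  calc K * |Real.exp g - 1| ≤ K * (2 * |g|) :=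
        mul_le_mul_of_nonneg_left (Real.abs_exp_sub_one_le hg1) (le_of_lt hKpos)
    _ ≤ K * (2 * (M * t)) := by gcongr
    _ = 2 * M * t * K := by ring
end

section
/- Fix x > 0. For t > 0 let u*(x,t) := (2t/ξ²)·(b/(e^{bt} − 1) − a/x) and d_t := ξ² t (1 − e^{bt}) / (2bt + u*(x,t)·ξ²(1 − e^{bt})). Then, as t → 0⁺, ∫_{−∞}^{∞} | e^{−iux} (1 + iu d_t)^{−μ} | / | u*(x,t)/t + iu | du = O(t); in particular this integral is finite for all sufficiently small t > 0. (Here (1 + iu d_t)^{−μ} is the principal branch complex power, and its modulus equals (1 + u² d_t²)^{−μ/2}.) -/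
open Real MeasureTheory Filter Topology
open scoped ENNReal

set_option maxHeartbeats 1000000

/-- `L¹` bound for the tilted characteristic function: for fixed `x > 0`,
`∫_ℝ |e^{−iux}(1 + iu d_t)^{−μ}| / |u*(x,t)/t + iu| du = O(t)` as `t → 0⁺`;
in particular the integral is finite for all small enough `t > 0`. -/
theorem tilted_characteristic_function_L1_bound
    (a ξ b : ℝ) (ha : 0 < a) (hξ : 0 < ξ) (hb : b < 0)
    (μ : ℝ) (hμ_def : μ = 2 * a / ξ ^ 2) (hμ : 1 < μ)
    (ustar : ℝ → ℝ → ℝ)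
    (hustar : ∀ x t, ustar x t = 2 * t / ξ ^ 2 * (b / (Real.exp (b * t) - 1) - a / x))
    (d : ℝ → ℝ → ℝ)
    (hd : ∀ x t, d x t = ξ ^ 2 * t * (1 - Real.exp (b * t))
        / (2 * b * t + ustar x t * ξ ^ 2 * (1 - Real.exp (b * t))))
    (x : ℝ) (hx : 0 < x) :
    ∃ C > (0 : ℝ), ∃ t₀ > (0 : ℝ), ∀ t, 0 < t → t < t₀ →
      (∫⁻ u : ℝ, ENNReal.ofReal
          (‖Complex.exp (-(Complex.I * u * x))
              * (1 + Complex.I * u * d x t) ^ (-(μ : ℂ))‖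
            / ‖((ustar x t / t : ℝ) + Complex.I * u : ℂ)‖))
        ≤ ENNReal.ofReal (C * t) := by
  have hμ0 : (0:ℝ) < μ := by linarith
  have hξ2 : (0:ℝ) < ξ^2 := by positivity
  have hξne : ξ ≠ 0 := hξ.ne'
  have hxne : x ≠ 0 := hx.ne'
  set d₀ : ℝ := x / μ with hd₀
  have hd₀pos : 0 < d₀ := by positivity
  -- integrability of the dominating function
  have hint : Integrable (fun u : ℝ => (1 + (d₀*u)^2) ^ (-μ/2)) := by
    have h1 : Integrable (fun y : ℝ => ((1:ℝ) + ‖y‖^2) ^ (-μ/2)) :=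
      integrable_rpow_neg_one_add_norm_sq (by simpa using hμ)
    have h2 := (integrable_comp_mul_left_iff
      (fun y : ℝ => ((1:ℝ) + ‖y‖^2) ^ (-μ/2)) hd₀pos.ne').2 h1
    simpa [Real.norm_eq_abs, abs_mul, mul_pow, sq_abs] using h2
  set I : ℝ := ∫ u : ℝ, (1 + (d₀*u)^2) ^ (-μ/2) with hI
  have hInn : 0 ≤ I := integral_nonneg fun u => Real.rpow_nonneg (by positivity) _
  refine ⟨ξ^2 * I + 1, by positivity, x/(2*a), by positivity, fun t ht ht₀ => ?_⟩
  have htne : t ≠ 0 := ht.ne'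
  set E := Real.exp (b*t) with hE
  have hEpos : 0 < E := Real.exp_pos _
  have hbt : b*t < 0 := mul_neg_of_neg_of_pos hb ht
  have hE1 : E < 1 := by rw [hE]; exact Real.exp_lt_one_iff.mpr hbt
  have h1E : 0 < 1 - E := by linarith
  have hE1ne : E - 1 ≠ 0 := by intro h; linarith [sub_eq_zero.mp h]
  have hE1b : 1 - E ≤ -(b*t) := by
    have := Real.add_one_le_exp (b*t); rw [← hE] at this; linarith
  -- Step A : d x t = -d₀
  have hden : 2*b*t + ustar x t * ξ^2 * (1 - E) = -(2*t*(a/x)*(1-E)) := by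
    rw [hustar, ← hE]
    field_simp
    ring
  have hdval : d x t = -d₀ := by
    rw [hd, ← hE, hden, hd₀, hμ_def]
    rw [div_neg, neg_eq_iff_eq_neg, neg_neg]
    rw [div_eq_div_iff (by positivity) (by positivity)]
    field_simp
  -- Step B : lower bound on v = ustar x t / t
  set v : ℝ := ustar x t / t with hv
  have hvval : v = 2/ξ^2 * (b/(E-1) - a/x) := by
    rw [hv, hustar, ← hE]; field_simp
  have hbE : 1/t ≤ b/(E-1) := by
    have h1 : (-b)/(1-E) = b/(E-1) := by
      rw [show (1-E) = -(E-1) by ring, neg_div_neg_eq]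
    rw [← h1, div_le_div_iff₀ ht h1E]
    nlinarith
  have hax : a/x ≤ 1/(2*t) := by
    rw [div_le_div_iff₀ hx (by positivity)]
    have h2 : t * (2*a) < x := (lt_div_iff₀ (by positivity : (0:ℝ) < 2*a)).mp ht₀
    nlinarith
  have hvge : 1/(ξ^2*t) ≤ v := by
    rw [hvval]
    have h12 : 1/t - 1/(2*t) = 1/(2*t) := by field_simp; ring
    have hmid : 1/(2*t) ≤ b/(E-1) - a/x := by linarith
    calc 1/(ξ^2*t) = 2/ξ^2 * (1/(2*t)) := by field_simp
      _ ≤ 2/ξ^2 * (b/(E-1) - a/x) :=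
        mul_le_mul_of_nonneg_left hmid (by positivity)
  have hvpos : 0 < v := lt_of_lt_of_le (by positivity) hvge
  have h1v : 1/v ≤ ξ^2*t := by
    have h2 : 1 ≤ v * (ξ^2*t) := (div_le_iff₀ (by positivity)).mp hvge
    rw [div_le_iff₀ hvpos]
    linarith [h2, mul_comm v (ξ^2*t)]
  -- Step C : pointwise bound
  have hpt : ∀ u : ℝ,
      ‖Complex.exp (-(Complex.I * u * x))
          * (1 + Complex.I * u * d x t) ^ (-(μ : ℂ))‖
        / ‖((v : ℝ) + Complex.I * u : ℂ)‖
        ≤ ξ^2*t * ((1 + (d₀*u)^2) ^ (-μ/2)) := by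
    intro u
    have habs_exp : ‖Complex.exp (-(Complex.I * u * x))‖ = 1 := by
      rw [Complex.norm_exp]; simp
    have hbase : ‖1 + Complex.I * u * (d x t)‖ = Real.sqrt (1 + (d₀*u)^2) := by
      rw [Complex.norm_def]
      congr 1
      rw [hdval]
      simp [Complex.normSq_apply]
      ring
    have hcpow : ‖(1 + Complex.I * u * d x t) ^ (-(μ:ℂ))‖
        = (1 + (d₀*u)^2) ^ (-μ/2) := by
      have hcast : (-(μ:ℂ)) = ((-μ : ℝ) : ℂ) := by push_cast; ring
      rw [hcast, Complex.norm_cpow_real, hbase, Real.sqrt_eq_rpow,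
        ← Real.rpow_mul (by positivity)]
      congr 1
      ring
    have hdenom_ge : v ≤ ‖(v:ℂ) + Complex.I*u‖ := by
      have h1 : (((v:ℝ):ℂ) + Complex.I*(u:ℂ)).re = v := by simp
      calc v ≤ |(((v:ℝ):ℂ) + Complex.I*(u:ℂ)).re| := by rw [h1]; exact le_abs_self v
        _ ≤ _ := Complex.abs_re_le_norm _
    have hApos : 0 ≤ (1 + (d₀*u)^2) ^ (-μ/2) := Real.rpow_nonneg (by positivity) _
    rw [norm_mul, habs_exp, one_mul, hcpow]
    calc (1 + (d₀*u)^2)^(-μ/2) / ‖(v:ℂ)+Complex.I*u‖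
        ≤ (1 + (d₀*u)^2)^(-μ/2) / v := by gcongr
      _ = (1 + (d₀*u)^2)^(-μ/2) * (1/v) := by ring
      _ ≤ (1 + (d₀*u)^2)^(-μ/2) * (ξ^2*t) := mul_le_mul_of_nonneg_left h1v hApos
      _ = ξ^2*t * ((1 + (d₀*u)^2)^(-μ/2)) := by ring
  -- Step D : integrate
  calc (∫⁻ u : ℝ, ENNReal.ofReal
          (‖Complex.exp (-(Complex.I * u * x))
              * (1 + Complex.I * u * d x t) ^ (-(μ : ℂ))‖
            / ‖((v : ℝ) + Complex.I * u : ℂ)‖))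
      ≤ ∫⁻ u : ℝ, ENNReal.ofReal (ξ^2*t * ((1 + (d₀*u)^2) ^ (-μ/2))) :=
        lintegral_mono fun u => ENNReal.ofReal_le_ofReal (hpt u)
    _ = ∫⁻ u : ℝ, ENNReal.ofReal (ξ^2*t) * ENNReal.ofReal ((1 + (d₀*u)^2) ^ (-μ/2)) := by
        simp_rw [ENNReal.ofReal_mul (by positivity : (0:ℝ) ≤ ξ^2*t)]
    _ = ENNReal.ofReal (ξ^2*t) * ∫⁻ u : ℝ, ENNReal.ofReal ((1 + (d₀*u)^2) ^ (-μ/2)) :=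
        lintegral_const_mul' _ _ ENNReal.ofReal_ne_top
    _ = ENNReal.ofReal (ξ^2*t) * ENNReal.ofReal I := by
        rw [← ofReal_integral_eq_lintegral_ofReal hint
          (Eventually.of_forall fun u => Real.rpow_nonneg (by positivity) _)]
    _ ≤ ENNReal.ofReal ((ξ^2*I+1)*t) := by
        rw [← ENNReal.ofReal_mul (by positivity)]
        refine ENNReal.ofReal_le_ofReal ?_
        nlinarith [ht.le, hInn]
end

section
/- Fix x > 0. For t > 0 let u*(x,t) := (2t/ξ²)·(b/(e^{bt} − 1) − a/x), and define the tilted probability measure Q_t on ℝ by dQ_t/dγ_t (z) = e^{u*(x,t) z / t} / ∫ e^{u*(x,t) w / t} γ_t(dw). Then, as t → 0⁺, ∫_{[x,∞)} exp(−(u*(x,t)/t)(z − x)) Q_t(dz) = O(t). -/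
open Real MeasureTheory Filter Topology Set
open scoped ENNReal

lemma gammaPDF_lintegral_Ici_zero {p m : ℝ} (hp : 0 < p) (hm : 0 < m) :
    ∫⁻ s in Set.Ici 0, ProbabilityTheory.gammaPDF p m s = 1 := by
  have h1 := ProbabilityTheory.lintegral_gammaPDF_eq_one hp hm
  have h0 : ∫⁻ s in Set.Iio 0, ProbabilityTheory.gammaPDF p m s = 0 := by
    rw [setLIntegral_congr_fun measurableSet_Iio
      (fun s (hs : s < 0) => ProbabilityTheory.gammaPDF_of_neg hs), lintegral_zero]
  rw [← lintegral_add_compl _ (measurableSet_Ici (a := (0:ℝ))) (μ := volume), compl_Ici, h0,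
    add_zero] at h1
  exact h1

lemma lintegral_exp_tail (m x : ℝ) (hm : 0 < m) :
    ∫⁻ z in Set.Ici x, ENNReal.ofReal (Real.exp (-(m * (z - x)))) = ENNReal.ofReal (1 / m) := by
  have hmp : MeasurePreserving (· + x) (volume : Measure ℝ) volume :=
    measurePreserving_add_right volume x
  have hpre : (· + x) ⁻¹' (Set.Ici x) = Set.Ici (0 : ℝ) := by
    ext z; simp [le_add_iff_nonneg_left]
  have hf : Measurable fun z : ℝ => ENNReal.ofReal (Real.exp (-(m * (z - x)))) :=
    (((measurable_id.sub_const x).const_mul m).neg.exp).ennreal_ofReal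
  have hstep := hmp.setLIntegral_comp_preimage (s := Set.Ici x) measurableSet_Ici
    (f := fun z : ℝ => ENNReal.ofReal (Real.exp (-(m * (z - x))))) hf
  rw [hpre] at hstep
  rw [← hstep]
  have hcong : ∀ s ∈ Set.Ici (0 : ℝ),
      ENNReal.ofReal (Real.exp (-(m * (s + x - x)))) =
        ENNReal.ofReal (1 / m) * ProbabilityTheory.gammaPDF 1 m s := by
    intro s hs
    rw [ProbabilityTheory.gammaPDF_of_nonneg hs, ← ENNReal.ofReal_mul (by positivity)]
    congr 1
    rw [Real.Gamma_one, sub_self, Real.rpow_zero, Real.rpow_one]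
    field_simp
    ring_nf
  rw [setLIntegral_congr_fun measurableSet_Ici hcong,
    lintegral_const_mul (f := ProbabilityTheory.gammaPDF 1 m) _
      ((ProbabilityTheory.measurable_gammaPDFReal 1 m).ennreal_ofReal),
    gammaPDF_lintegral_Ici_zero one_pos hm, mul_one]

set_option maxHeartbeats 1000000 in
/-- The damped tail functional under the tilted measure is `O(t)`: fixing `x > 0` and
tilting `γ_t` by `e^{u*(x,t)z/t}` (normalized), one has
`∫_{[x,∞)} exp(−(u*(x,t)/t)(z−x)) dQ_t = O(t)` as `t → 0⁺`. -/
theorem tilted_damped_tail_is_O_t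
    (a ξ b : ℝ) (ha : 0 < a) (hξ : 0 < ξ) (hb : b < 0)
    (μ : ℝ) (hμ_def : μ = 2 * a / ξ ^ 2) (hμ : 1 < μ)
    (lam : ℝ → ℝ) (hlam : ∀ t, lam t = -2 * b / (ξ ^ 2 * (1 - Real.exp (b * t))))
    (γ : ℝ → Measure ℝ)
    (hγ : ∀ t, 0 < t → γ t = ProbabilityTheory.gammaMeasure μ (lam t))
    (x : ℝ) (hx : 0 < x)
    (ustar : ℝ → ℝ)
    (hustar : ∀ t, ustar t = 2 * t / ξ ^ 2 * (b / (Real.exp (b * t) - 1) - a / x))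
    (Q : ℝ → Measure ℝ)
    (hQ : ∀ t, 0 < t → Q t = (γ t).withDensity
        (fun z => ENNReal.ofReal (Real.exp (ustar t * z / t))
          / ∫⁻ w, ENNReal.ofReal (Real.exp (ustar t * w / t)) ∂(γ t))) :
    ∃ C > (0 : ℝ), ∃ t₀ > (0 : ℝ), ∀ t, 0 < t → t < t₀ →
      (∫⁻ z in Set.Ici x, ENNReal.ofReal (Real.exp (-(ustar t / t) * (z - x))) ∂(Q t))
        ≤ ENNReal.ofReal (C * t) := by
  have hμ0 : 0 < μ := lt_trans one_pos hμ
  set c : ℝ := μ / x with hc_def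
  set κ : ℝ := (μ - 1) / x with hκ_def
  have hξ2 : (0:ℝ) < ξ ^ 2 := by positivity
  have hc : 0 < c := div_pos hμ0 hx
  have hκpos : 0 < κ := div_pos (by linarith) hx
  have hΓ : 0 < Real.Gamma μ := Real.Gamma_pos_of_pos hμ0
  refine ⟨Real.exp (-(c*x)) * c^μ * x^(μ-1) / Real.Gamma μ * ξ^2, by positivity,
    1/(ξ^2*κ), by positivity, ?_⟩
  intro t ht ht0
  have ht' : t ≠ 0 := ht.ne'
  have hexp1 : Real.exp (b*t) < 1 := by
    rw [← Real.exp_zero]; exact Real.exp_lt_exp.mpr (by nlinarith)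
  have hden : 0 < 1 - Real.exp (b*t) := by linarith
  have hden' : Real.exp (b*t) - 1 ≠ 0 := by linarith
  set L := lam t with hL_def
  have hL_pos : 0 < L := by
    rw [hL_def, hlam]; exact div_pos (by linarith) (by positivity)
  have hL_ge : 2/(ξ^2*t) ≤ L := by
    rw [hL_def, hlam]
    have h1 : 1 - Real.exp (b*t) ≤ -b*t := by nlinarith [Real.add_one_le_exp (b*t)]
    have h2 : (-2*b)/(ξ^2*(-b*t)) = 2/(ξ^2*t) := by
      rw [div_eq_div_iff (by nlinarith) (by positivity)]
      ring
    rw [← h2]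
    exact div_le_div_of_nonneg_left (by linarith) (by positivity)
      (mul_le_mul_of_nonneg_left h1 hξ2.le)
  have hκ2L : κ + κ ≤ L := by
    have h3 : t * (ξ^2*κ) < 1 := by
      have := (lt_div_iff₀ (by positivity : (0:ℝ) < ξ^2*κ)).mp ht0
      linarith [this]
    have h4 : κ + κ ≤ 2/(ξ^2*t) := by
      rw [le_div_iff₀ (by positivity)]
      nlinarith
    linarith
  have hLκ : 0 < L - κ := by linarith
  have h_inv : 1/(L-κ) ≤ ξ^2 * t := by
    have h5 : 1/(ξ^2*t) ≤ L - κ := by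
      have : 2/(ξ^2*t) = 1/(ξ^2*t) + 1/(ξ^2*t) := by ring
      have h6 : (0:ℝ) < 1/(ξ^2*t) := by positivity
      nlinarith [hL_ge, hκpos]
    calc 1/(L-κ) ≤ 1/(1/(ξ^2*t)) := one_div_le_one_div_of_le (by positivity) h5
      _ = ξ^2*t := one_div_one_div _
  set θ := ustar t / t with hθ_def
  have hθ : θ = L - c := by
    rw [hθ_def, hustar, hL_def, hlam, hc_def, hμ_def]
    field_simp
    rw [show rexp (t * b) - 1 = -(1 - rexp (t * b)) by ring, div_neg]
  have hθz : ∀ z : ℝ, ustar t * z / t = θ * z := fun z => by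
    rw [hθ_def, mul_div_right_comm]
  have hγt := hγ t ht
  have hgmeasL : Measurable (ProbabilityTheory.gammaPDF μ L) :=
    (ProbabilityTheory.measurable_gammaPDFReal μ L).ennreal_ofReal
  have hgmeasc : Measurable (ProbabilityTheory.gammaPDF μ c) :=
    (ProbabilityTheory.measurable_gammaPDFReal μ c).ennreal_ofReal
  have hemeas : Measurable fun w : ℝ => ENNReal.ofReal (Real.exp (ustar t * w / t)) :=
    (((measurable_id.const_mul (ustar t)).div_const t).exp).ennreal_ofReal
  set Z := ∫⁻ w, ENNReal.ofReal (Real.exp (ustar t * w / t)) ∂(γ t) with hZ_def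
  have hpt : ∀ w : ℝ, ProbabilityTheory.gammaPDF μ L w * ENNReal.ofReal (Real.exp (ustar t * w / t))
      = ENNReal.ofReal ((L/c)^μ) * ProbabilityTheory.gammaPDF μ c w := by
    intro w
    rcases le_or_gt 0 w with h | h
    · rw [hθz w, ProbabilityTheory.gammaPDF_of_nonneg h, ProbabilityTheory.gammaPDF_of_nonneg h,
        ← ENNReal.ofReal_mul (by positivity), ← ENNReal.ofReal_mul (by positivity)]
      congr 1
      rw [hθ, Real.div_rpow hL_pos.le hc.le]
      have he : Real.exp (-(L*w)) * Real.exp ((L-c)*w) = Real.exp (-(c*w)) := by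
        rw [← Real.exp_add]; congr 1; ring
      have hcne : c^μ ≠ 0 := (Real.rpow_pos_of_pos hc μ).ne'
      field_simp
      rw [mul_comm w (L - c), mul_comm w c]
      linear_combination w^(μ-1) * he
    · rw [ProbabilityTheory.gammaPDF_of_neg h, ProbabilityTheory.gammaPDF_of_neg h,
        zero_mul, mul_zero]
  have hZ : Z = ENNReal.ofReal ((L/c)^μ) := by
    rw [hZ_def, hγt, ProbabilityTheory.gammaMeasure,
      lintegral_withDensity_eq_lintegral_mul _ hgmeasL hemeas]
    simp only [Pi.mul_apply]
    rw [lintegral_congr hpt,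
      lintegral_const_mul (f := ProbabilityTheory.gammaPDF μ c) _ hgmeasc,
      ProbabilityTheory.lintegral_gammaPDF_eq_one hμ0 hc, mul_one]
  have hfmeas : Measurable fun z : ℝ => ENNReal.ofReal (Real.exp (ustar t * z / t)) / Z :=
    hemeas.div_const Z
  have hdamp_meas : Measurable fun z : ℝ => ENNReal.ofReal (Real.exp (-θ * (z - x))) :=
    (((measurable_id.sub_const x).const_mul (-θ)).exp).ennreal_ofReal
  have hred : (∫⁻ z in Set.Ici x, ENNReal.ofReal (Real.exp (-θ * (z - x))) ∂(Q t))
      = (ENNReal.ofReal (Real.exp (θ * x)) / Z) * (γ t) (Set.Ici x) := by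
    rw [hQ t ht, ← hZ_def, restrict_withDensity measurableSet_Ici,
      lintegral_withDensity_eq_lintegral_mul _ hfmeas hdamp_meas]
    simp only [Pi.mul_apply]
    have hconst : ∀ z : ℝ, (ENNReal.ofReal (Real.exp (ustar t * z / t)) / Z)
        * ENNReal.ofReal (Real.exp (-θ * (z - x)))
        = ENNReal.ofReal (Real.exp (θ * x)) / Z := by
      intro z
      rw [hθz z, div_eq_mul_inv, div_eq_mul_inv, mul_right_comm,
        ← ENNReal.ofReal_mul (by positivity), ← Real.exp_add]
      congr 3
      ring
    rw [lintegral_congr hconst, setLIntegral_const]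
  have hptb : ∀ z ∈ Set.Ici x, ProbabilityTheory.gammaPDF μ L z ≤
      ENNReal.ofReal (L^μ / Real.Gamma μ * x^(μ-1) * Real.exp (-(L*x)))
        * ENNReal.ofReal (Real.exp (-((L-κ)*(z-x)))) := by
    intro z hz
    have hzx : x ≤ z := hz
    have hz0 : 0 < z := lt_of_lt_of_le hx hzx
    rw [ProbabilityTheory.gammaPDF_of_nonneg hz0.le, ← ENNReal.ofReal_mul (by positivity)]
    apply ENNReal.ofReal_le_ofReal
    have hzxpos : 0 < z/x := div_pos hz0 hx
    have hkey : z^(μ-1) ≤ x^(μ-1) * Real.exp (κ*(z-x)) := by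
      have h1 : z^(μ-1) = x^(μ-1) * (z/x)^(μ-1) := by
        rw [Real.div_rpow hz0.le hx.le]
        field_simp
      have h2 : (z/x)^(μ-1) ≤ Real.exp (κ*(z-x)) := by
        rw [Real.rpow_def_of_pos hzxpos]
        apply Real.exp_le_exp.mpr
        have hlog := Real.log_le_sub_one_of_pos hzxpos
        have heq : κ*(z-x) = (μ-1)*(z/x-1) := by rw [hκ_def]; field_simp
        rw [heq]
        nlinarith [hlog]
      calc z^(μ-1) = x^(μ-1) * (z/x)^(μ-1) := h1
        _ ≤ x^(μ-1) * Real.exp (κ*(z-x)) :=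
            mul_le_mul_of_nonneg_left h2 (Real.rpow_nonneg hx.le _)
    have hee : Real.exp (κ*(z-x)) * Real.exp (-(L*z))
        = Real.exp (-(L*x)) * Real.exp (-((L-κ)*(z-x))) := by
      rw [← Real.exp_add, ← Real.exp_add]; congr 1; ring
    have hLΓ : (0:ℝ) ≤ L^μ / Real.Gamma μ := by positivity
    calc L^μ / Real.Gamma μ * z^(μ-1) * Real.exp (-(L*z))
        ≤ L^μ / Real.Gamma μ * (x^(μ-1) * Real.exp (κ*(z-x))) * Real.exp (-(L*z)) := by
          apply mul_le_mul_of_nonneg_right _ (Real.exp_pos _).le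
          exact mul_le_mul_of_nonneg_left hkey hLΓ
      _ = L^μ / Real.Gamma μ * x^(μ-1) * Real.exp (-(L*x)) * Real.exp (-((L-κ)*(z-x))) := by
          linear_combination (L^μ / Real.Gamma μ * x^(μ-1)) * hee
  have hD : (γ t) (Set.Ici x) ≤ ENNReal.ofReal (L^μ / Real.Gamma μ * x^(μ-1) * Real.exp (-(L*x)))
      * ENNReal.ofReal (1/(L-κ)) := by
    rw [hγt, ProbabilityTheory.gammaMeasure, withDensity_apply _ measurableSet_Ici]
    calc (∫⁻ z in Set.Ici x, ProbabilityTheory.gammaPDF μ L z)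
        ≤ ∫⁻ z in Set.Ici x, ENNReal.ofReal (L^μ / Real.Gamma μ * x^(μ-1) * Real.exp (-(L*x)))
            * ENNReal.ofReal (Real.exp (-((L-κ)*(z-x)))) :=
          setLIntegral_mono
            ((((((measurable_id.sub_const x).const_mul (L-κ)).neg.exp).ennreal_ofReal).const_mul _)) hptb
      _ = _ := by
          rw [lintegral_const_mul (f := fun z : ℝ => ENNReal.ofReal (Real.exp (-((L-κ)*(z-x)))))
            _ (by fun_prop), lintegral_exp_tail (L-κ) x hLκ]
  have hK : Real.exp (θ*x)/((L/c)^μ) * (L^μ/Real.Gamma μ * x^(μ-1) * Real.exp (-(L*x)))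
      = Real.exp (-(c*x)) * c^μ * x^(μ-1) / Real.Gamma μ := by
    rw [hθ, Real.div_rpow hL_pos.le hc.le]
    have he2 : Real.exp ((L-c)*x) * Real.exp (-(L*x)) = Real.exp (-(c*x)) := by
      rw [← Real.exp_add]; congr 1; ring
    have hLμ : L^μ ≠ 0 := (Real.rpow_pos_of_pos hL_pos μ).ne'
    have hcμ : c^μ ≠ 0 := (Real.rpow_pos_of_pos hc μ).ne'
    field_simp
    linear_combination he2
  have hreal : Real.exp (θ*x)/((L/c)^μ) * (L^μ/Real.Gamma μ * x^(μ-1) * Real.exp (-(L*x))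
        * (1/(L-κ)))
      ≤ Real.exp (-(c*x)) * c^μ * x^(μ-1) / Real.Gamma μ * ξ^2 * t := by
    calc Real.exp (θ*x)/((L/c)^μ) * (L^μ/Real.Gamma μ * x^(μ-1) * Real.exp (-(L*x)) * (1/(L-κ)))
        = Real.exp (-(c*x)) * c^μ * x^(μ-1) / Real.Gamma μ * (1/(L-κ)) := by
          rw [← mul_assoc, hK]
      _ ≤ Real.exp (-(c*x)) * c^μ * x^(μ-1) / Real.Gamma μ * (ξ^2*t) :=
          mul_le_mul_of_nonneg_left h_inv (by positivity)
      _ = Real.exp (-(c*x)) * c^μ * x^(μ-1) / Real.Gamma μ * ξ^2 * t := by ring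
  calc (∫⁻ z in Set.Ici x, ENNReal.ofReal (Real.exp (-θ * (z - x))) ∂(Q t))
      = (ENNReal.ofReal (Real.exp (θ * x)) / Z) * (γ t) (Set.Ici x) := hred
    _ ≤ (ENNReal.ofReal (Real.exp (θ * x)) / Z)
        * (ENNReal.ofReal (L^μ / Real.Gamma μ * x^(μ-1) * Real.exp (-(L*x)))
          * ENNReal.ofReal (1/(L-κ))) := mul_le_mul_right hD _
    _ = ENNReal.ofReal (Real.exp (θ*x)/((L/c)^μ)
        * (L^μ/Real.Gamma μ * x^(μ-1) * Real.exp (-(L*x)) * (1/(L-κ)))) := by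
        rw [hZ, ← ENNReal.ofReal_div_of_pos (Real.rpow_pos_of_pos (div_pos hL_pos hc) μ),
          ← ENNReal.ofReal_mul (by positivity), ← ENNReal.ofReal_mul (by positivity)]
    _ ≤ ENNReal.ofReal (Real.exp (-(c*x)) * c^μ * x^(μ-1) / Real.Gamma μ * ξ^2 * t) :=
        ENNReal.ofReal_le_ofReal hreal
end

section
/- For each n ≥ 1 let ν_n be the exponential distribution with rate n. Then for every Borel set A ⊆ ℝ one has −inf_{x ∈ interior(A)} Λ*(x) ≤ liminf_{n→∞} (1/n)·log ν_n(A) ≤ limsup_{n→∞} (1/n)·log ν_n(A) ≤ −inf_{x ∈ closure(A)} Λ*(x), where Λ*(x) := x for x ≥ 0 and Λ*(x) := +∞ for x < 0 (with the convention inf ∅ = +∞). -/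
open Real MeasureTheory Filter Topology
open scoped ENNReal

namespace ExpLDPAux

open ProbabilityTheory

lemma expMeasure_Iic {r : ℝ} (hr : 0 < r) (x : ℝ) :
    expMeasure r (Set.Iic x)
      = ENNReal.ofReal (if 0 ≤ x then 1 - rexp (-(r * x)) else 0) := by
  rw [expMeasure, gammaMeasure, withDensity_apply _ measurableSet_Iic]
  exact lintegral_exponentialPDF_eq_antiDeriv hr x

lemma expMeasure_Iio {r : ℝ} (hr : 0 < r) (x : ℝ) :
    expMeasure r (Set.Iio x)
      = ENNReal.ofReal (if 0 ≤ x then 1 - rexp (-(r * x)) else 0) := by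
  rw [← expMeasure_Iic hr x, expMeasure, gammaMeasure,
    withDensity_apply _ measurableSet_Iio, withDensity_apply _ measurableSet_Iic]
  exact setLIntegral_congr Iio_ae_eq_Iic

lemma expMeasure_Ici {r : ℝ} (hr : 0 < r) {x : ℝ} (hx : 0 ≤ x) :
    expMeasure r (Set.Ici x) = ENNReal.ofReal (rexp (-(r * x))) := by
  have := isProbabilityMeasure_expMeasure hr
  have hcompl : Set.Ici x = (Set.Iio x)ᶜ := by simp
  rw [hcompl, measure_compl measurableSet_Iio (measure_ne_top _ _), measure_univ,
    expMeasure_Iio hr, if_pos hx]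
  refine (ENNReal.eq_sub_of_add_eq ENNReal.ofReal_ne_top ?_).symm
  have he1 : rexp (-(r * x)) ≤ 1 := by
    rw [← Real.exp_zero]
    exact Real.exp_le_exp.2 (by nlinarith)
  rw [← ENNReal.ofReal_add (exp_pos _).le (by linarith)]
  norm_num

lemma expMeasure_Ioc {r : ℝ} (hr : 0 < r) {a b : ℝ} (ha : 0 ≤ a) (hab : a ≤ b) :
    expMeasure r (Set.Ioc a b)
      = ENNReal.ofReal (rexp (-(r * a)) - rexp (-(r * b))) := by
  have := isProbabilityMeasure_expMeasure hr
  have hea : rexp (-(r * a)) ≤ 1 := by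
    rw [← Real.exp_zero]
    exact Real.exp_le_exp.2 (by nlinarith)
  rw [← Set.Iic_sdiff_Iic,
    measure_diff (Set.Iic_subset_Iic.2 hab) measurableSet_Iic.nullMeasurableSet
      (measure_ne_top _ _),
    expMeasure_Iic hr, expMeasure_Iic hr, if_pos ha, if_pos (ha.trans hab),
    ← ENNReal.ofReal_sub _ (by linarith)]
  congr 1
  ring

end ExpLDPAux

/-- Large deviations principle for exponential laws `ν_n` with rate `n`, with the
non-strictly-convex rate function `Λ*(x) = x` for `x ≥ 0` and `+∞` for `x < 0`. -/
theorem exponential_LDP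
    (ν : ℕ → Measure ℝ)
    (hν : ∀ n : ℕ, 1 ≤ n → ν n = ProbabilityTheory.expMeasure n)
    (Λstar : ℝ → EReal)
    (hΛstar : ∀ x, Λstar x = if 0 ≤ x then (x : EReal) else ⊤)
    (A : Set ℝ) (hA : MeasurableSet A) :
    -(⨅ x ∈ interior A, Λstar x)
        ≤ liminf (fun n : ℕ => ((1 : ℝ) / n : ℝ) * ENNReal.log (ν n A)) atTop
    ∧ liminf (fun n : ℕ => ((1 : ℝ) / n : ℝ) * ENNReal.log (ν n A)) atTop
        ≤ limsup (fun n : ℕ => ((1 : ℝ) / n : ℝ) * ENNReal.log (ν n A)) atTop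
    ∧ limsup (fun n : ℕ => ((1 : ℝ) / n : ℝ) * ENNReal.log (ν n A)) atTop
        ≤ -(⨅ x ∈ closure A, Λstar x) := by
  refine ⟨?_, Filter.liminf_le_limsup, ?_⟩
  · -- lower bound
    rw [EReal.neg_le]
    refine le_iInf₂ fun x hx => ?_
    rw [hΛstar]
    split_ifs with h0
    swap
    · exact le_top
    rw [EReal.neg_le]
    -- show -(x : EReal) ≤ liminf
    obtain ⟨δ, hδ, hball⟩ := Metric.mem_nhds_iff.1 (mem_interior_iff_mem_nhds.1 hx)
    set b := x + δ / 2 with hb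
    have hIoc : Set.Ioc x b ⊆ A := by
      intro y hy
      obtain ⟨hy1, hy2⟩ := hy
      rw [hb] at hy2
      apply hball
      rw [Real.ball_eq_Ioo]
      exact ⟨by linarith, by linarith⟩
    set g : ℕ → ℝ := fun n => -x + (1 / (n : ℝ)) * Real.log (1 - rexp (-((n : ℝ) * (δ / 2))))
      with hg
    -- tendsto of g
    have h1 : Tendsto (fun n : ℕ => rexp (-((n : ℝ) * (δ / 2)))) atTop (𝓝 0) := by
      apply Real.tendsto_exp_atBot.comp
      exact tendsto_neg_atTop_atBot.comp
        ((tendsto_natCast_atTop_atTop).atTop_mul_const (by linarith))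
    have h2 : Tendsto (fun n : ℕ => Real.log (1 - rexp (-((n : ℝ) * (δ / 2))))) atTop (𝓝 0) := by
      have ht : Tendsto (fun n : ℕ => 1 - rexp (-((n : ℝ) * (δ / 2)))) atTop (𝓝 1) := by
        simpa using (tendsto_const_nhds.sub h1)
      have := (Real.continuousAt_log one_ne_zero).tendsto.comp ht
      simpa [Function.comp_def] using this
    have h3 : Tendsto g atTop (𝓝 (-x)) := by
      have := (tendsto_const_nhds : Tendsto (fun _ : ℕ => -x) atTop (𝓝 (-x))).add
        (tendsto_one_div_atTop_nhds_zero_nat.mul h2)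
      simpa [hg, one_div] using this
    have h4 : Tendsto (fun n : ℕ => ((g n : ℝ) : EReal)) atTop (𝓝 ((-x : ℝ) : EReal)) :=
      EReal.tendsto_coe.2 h3
    have h5 : ∀ᶠ n : ℕ in atTop,
        ((g n : ℝ) : EReal) ≤ ((1 : ℝ) / n : ℝ) * ENNReal.log (ν n A) := by
      filter_upwards [eventually_ge_atTop 1] with n hn
      have hnpos : (0 : ℝ) < n := by exact_mod_cast hn
      have hposδ : 0 < (n : ℝ) * (δ / 2) := by positivity
      have heδ : rexp (-((n : ℝ) * (δ / 2))) < 1 := by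
        rw [← Real.exp_zero]
        exact Real.exp_lt_exp.2 (by linarith)
      have hfac : rexp (-((n : ℝ) * x)) - rexp (-((n : ℝ) * b))
          = rexp (-((n : ℝ) * x)) * (1 - rexp (-((n : ℝ) * (δ / 2)))) := by
        rw [mul_sub, mul_one, ← Real.exp_add]
        congr 2
        rw [hb]; ring
      have hpos : 0 < rexp (-((n : ℝ) * x)) - rexp (-((n : ℝ) * b)) := by
        rw [hfac]
        exact mul_pos (exp_pos _) (by linarith)
      have hm : ENNReal.ofReal (rexp (-((n : ℝ) * x)) - rexp (-((n : ℝ) * b))) ≤ ν n A := by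
        rw [hν n hn, ← ExpLDPAux.expMeasure_Ioc hnpos h0 (by rw [hb]; linarith)]
        exact measure_mono hIoc
      have hlog : ((Real.log (rexp (-((n : ℝ) * x)) - rexp (-((n : ℝ) * b))) : ℝ) : EReal)
          ≤ ENNReal.log (ν n A) := by
        rw [← ENNReal.log_ofReal_of_pos hpos]
        exact ENNReal.log_le_log_iff.2 hm
      calc ((g n : ℝ) : EReal)
          = (((1 : ℝ) / n) * Real.log (rexp (-((n : ℝ) * x)) - rexp (-((n : ℝ) * b))) : ℝ) := by
            norm_cast
            rw [hfac, Real.log_mul (exp_ne_zero _) (by linarith), Real.log_exp, hg]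
            field_simp
        _ = ((1 : ℝ) / n : ℝ) * ((Real.log (rexp (-((n : ℝ) * x)) - rexp (-((n : ℝ) * b))) : ℝ)
              : EReal) := by rw [← EReal.coe_mul]
        _ ≤ ((1 : ℝ) / n : ℝ) * ENNReal.log (ν n A) :=
            mul_le_mul_of_nonneg_left hlog (by exact_mod_cast (by positivity : (0:ℝ) ≤ 1 / n))
    calc (-(x : EReal)) = ((-x : ℝ) : EReal) := by norm_cast
      _ = liminf (fun n : ℕ => ((g n : ℝ) : EReal)) atTop := (h4.liminf_eq).symm
      _ ≤ liminf (fun n : ℕ => ((1 : ℝ) / n : ℝ) * ENNReal.log (ν n A)) atTop :=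
          Filter.liminf_le_liminf h5
  · -- upper bound
    by_cases hex : ∃ x ∈ closure A, 0 ≤ x
    · obtain ⟨x₀, hx₀A, hx₀⟩ := hex
      set I := ⨅ x ∈ closure A, Λstar x with hI
      have hI0 : (0 : EReal) ≤ I := by
        refine le_iInf₂ fun x hx => ?_
        rw [hΛstar]
        split_ifs with h
        · exact_mod_cast h
        · exact le_top
      have hIle : I ≤ (x₀ : EReal) := by
        have := iInf₂_le (f := fun x (_ : x ∈ closure A) => Λstar x) x₀ hx₀A
        rwa [hΛstar, if_pos hx₀] at this
      have hItop : I ≠ ⊤ := (lt_of_le_of_lt hIle (EReal.coe_lt_top x₀)).ne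
      have hIbot : I ≠ ⊥ := ne_of_gt (lt_of_lt_of_le (by norm_num : (⊥ : EReal) < 0) hI0)
      set c := I.toReal with hcdef
      have hc : (c : EReal) = I := EReal.coe_toReal hItop hIbot
      have hc0 : (0 : ℝ) ≤ c := by
        rw [← EReal.coe_le_coe_iff, hc]
        exact_mod_cast hI0
      have hsub : ∀ x ∈ A, 0 ≤ x → c ≤ x := by
        intro x hx h0x
        have := iInf₂_le (f := fun x (_ : x ∈ closure A) => Λstar x) x (subset_closure hx)
        rw [hΛstar, if_pos h0x] at this
        rw [← EReal.coe_le_coe_iff, hc]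
        exact this
      have hbound : ∀ᶠ n : ℕ in atTop,
          (((1 : ℝ) / n : ℝ) * ENNReal.log (ν n A) : EReal) ≤ ((-c : ℝ) : EReal) := by
        filter_upwards [eventually_ge_atTop 1] with n hn
        have hnpos : (0 : ℝ) < n := by exact_mod_cast hn
        have hm : ν n A ≤ ENNReal.ofReal (rexp (-((n : ℝ) * c))) := by
          rw [hν n hn]
          calc ProbabilityTheory.expMeasure (n : ℝ) A
              ≤ ProbabilityTheory.expMeasure (n : ℝ) (Set.Ici c ∪ Set.Iio 0) := by
                refine measure_mono fun y hy => ?_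
                rcases le_or_gt 0 y with h | h
                · exact Or.inl (hsub y hy h)
                · exact Or.inr h
            _ ≤ ProbabilityTheory.expMeasure (n : ℝ) (Set.Ici c)
                + ProbabilityTheory.expMeasure (n : ℝ) (Set.Iio 0) := measure_union_le _ _
            _ = ENNReal.ofReal (rexp (-((n : ℝ) * c))) := by
                rw [ExpLDPAux.expMeasure_Ici hnpos hc0, ExpLDPAux.expMeasure_Iio hnpos]
                simp
        have hlog : ENNReal.log (ν n A) ≤ ((-((n : ℝ) * c) : ℝ) : EReal) := by
          calc ENNReal.log (ν n A) ≤ ENNReal.log (ENNReal.ofReal (rexp (-((n : ℝ) * c)))) :=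
              ENNReal.log_le_log_iff.2 hm
            _ = ((-((n : ℝ) * c) : ℝ) : EReal) := by
                rw [ENNReal.log_ofReal_of_pos (exp_pos _), Real.log_exp]
        calc (((1 : ℝ) / n : ℝ) * ENNReal.log (ν n A) : EReal)
            ≤ ((1 : ℝ) / n : ℝ) * ((-((n : ℝ) * c) : ℝ) : EReal) :=
              mul_le_mul_of_nonneg_left hlog
                (by exact_mod_cast (by positivity : (0:ℝ) ≤ 1 / n))
          _ = ((-c : ℝ) : EReal) := by
              rw [← EReal.coe_mul]
              norm_cast
              field_simp
        -- done
      calc limsup (fun n : ℕ => ((1 : ℝ) / n : ℝ) * ENNReal.log (ν n A)) atTop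
          ≤ ((-c : ℝ) : EReal) := Filter.limsup_le_of_le (by isBoundedDefault) hbound
        _ = -I := by rw [← hc]; norm_cast
    · push_neg at hex
      have hAsub : A ⊆ Set.Iio 0 := fun x hx => hex x (subset_closure hx)
      have hbound : ∀ᶠ n : ℕ in atTop,
          (((1 : ℝ) / n : ℝ) * ENNReal.log (ν n A) : EReal) ≤ ⊥ := by
        filter_upwards [eventually_ge_atTop 1] with n hn
        have hnpos : (0 : ℝ) < n := by exact_mod_cast hn
        have hzero : ν n A = 0 := by
          refine le_antisymm ?_ zero_le
          calc ν n A ≤ ν n (Set.Iio 0) := measure_mono hAsub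
            _ = 0 := by
              rw [hν n hn, ExpLDPAux.expMeasure_Iio hnpos]
              simp
        rw [hzero, ENNReal.log_zero, EReal.coe_mul_bot_of_pos (by exact_mod_cast
          (by positivity : (0:ℝ) < 1 / n))]
      exact le_trans (Filter.limsup_le_of_le (by isBoundedDefault) hbound) bot_le
end
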